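/- Let n ≥ 2, i : Fin n, and ε : Fin n → Bool with ε i = true (positive auto-regulation). Define f* : (Fin n → Bool) → Bool by f* s = true iff s i = true and there exists k ≠ i with s k = ε k. Then f* has exactly one transition at i: the number of decreasing transitions of f* at i equals 1 and the number of increasing transitions of f* at i equals 0. Moreover, for every f : (Fin n → Bool) → Bool consistent with ε: if f s = true implies f* s = true for all s, then f has no increasing transitions at i and at least one decreasing transition at i; and if f* s = true implies f s = true for all s, then f has at most one decreasing transition at i. -/
import Mathlib


/-- `f` does not depend on coordinate `i`. -/
def IndepOf {n : ℕ} (f : (Fin n → Bool) → Bool) (i : Fin n) : Prop :=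
  ∀ (s : Fin n → Bool) (b : Bool), f (Function.update s i b) = f s

/-- Coordinate `i` is essential for `f`. -/
def EssentialCoord {n : ℕ} (f : (Fin n → Bool) → Bool) (i : Fin n) : Prop :=
  ∃ s : Fin n → Bool, f (Function.update s i false) ≠ f (Function.update s i true)

/-- `f` is positive in coordinate `i`. -/
def PosIn {n : ℕ} (f : (Fin n → Bool) → Bool) (i : Fin n) : Prop :=
  ∀ s : Fin n → Bool,
    f (Function.update s i false) = true → f (Function.update s i true) = true

/-- `f` is negative in coordinate `i`. -/
def NegIn {n : ℕ} (f : (Fin n → Bool) → Bool) (i : Fin n) : Prop :=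
  ∀ s : Fin n → Bool,
    f (Function.update s i true) = true → f (Function.update s i false) = true

/-- `f` is consistent with the sign vector `ε`: it is nondegenerate and each
coordinate acts with its prescribed sign. -/
def ConsistentWith {n : ℕ} (ε : Fin n → Bool) (f : (Fin n → Bool) → Bool) : Prop :=
  (∀ i : Fin n, EssentialCoord f i) ∧
  ∀ i : Fin n, (ε i = true → PosIn f i) ∧ (ε i = false → NegIn f i)

/-- Number of transitions of `f` at coordinate `i`: states where `f s ≠ s i`. -/
noncomputable def numTrans {n : ℕ} (f : (Fin n → Bool) → Bool) (i : Fin n) : ℕ :=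
  Nat.card {s : Fin n → Bool // f s ≠ s i}

/-- Number of increasing transitions of `f` at coordinate `i`. -/
noncomputable def numInc {n : ℕ} (f : (Fin n → Bool) → Bool) (i : Fin n) : ℕ :=
  Nat.card {s : Fin n → Bool // s i = false ∧ f s = true}

/-- Number of decreasing transitions of `f` at coordinate `i`. -/
noncomputable def numDec {n : ℕ} (f : (Fin n → Bool) → Bool) (i : Fin n) : ℕ :=
  Nat.card {s : Fin n → Bool // s i = true ∧ f s = false}

/-- The maximally functional positive auto-regulation function `f*`. -/
def fstarPos {n : ℕ} (ε : Fin n → Bool) (i : Fin n) : (Fin n → Bool) → Bool :=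
  fun s => decide (s i = true ∧ ∃ k : Fin n, k ≠ i ∧ s k = ε k)

theorem fstar_positive_autoregulation (n : ℕ) (hn : 2 ≤ n) (i : Fin n)
    (ε : Fin n → Bool) (hi : ε i = true) :
    numDec (fstarPos ε i) i = 1 ∧
    numInc (fstarPos ε i) i = 0 ∧
    ∀ f : (Fin n → Bool) → Bool, ConsistentWith ε f →
      ((∀ s : Fin n → Bool, f s = true → fstarPos ε i s = true) →
        numInc f i = 0 ∧ 1 ≤ numDec f i) ∧
      ((∀ s : Fin n → Bool, fstarPos ε i s = true → f s = true) →
        numDec f i ≤ 1) := by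
  classical
  set sb : Fin n → Bool := fun k => if k = i then true else !ε k with hsb
  have hsbi : sb i = true := by simp [hsb]
  have hsbf : fstarPos ε i sb = false := by
    simp only [fstarPos, decide_eq_false_iff_not, not_and]
    intro _
    rintro ⟨k, hk, hks⟩
    simp [hsb, hk] at hks
  have hmem : ∀ s : Fin n → Bool, s i = true → fstarPos ε i s = false → s = sb := by
    intro s hs hf
    funext k
    by_cases hk : k = i
    · simp [hsb, hk, hs]
    · simp only [fstarPos, decide_eq_false_iff_not, not_and] at hf
      have h1 := hf hs
      push_neg at h1
      have hk' := h1 k hk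
      simp only [hsb, hk, if_neg hk]
      cases h2 : s k <;> cases h3 : ε k <;> simp_all
  refine ⟨?_, ?_, ?_⟩
  · rw [numDec, Nat.card_eq_one_iff_unique]
    refine ⟨⟨?_⟩, ⟨⟨sb, hsbi, hsbf⟩⟩⟩
    rintro ⟨s, hs1, hs2⟩ ⟨t, ht1, ht2⟩
    exact Subtype.ext ((hmem s hs1 hs2).trans (hmem t ht1 ht2).symm)
  · rw [numInc, Nat.card_eq_zero]
    left; constructor
    rintro ⟨s, hs1, hs2⟩
    simp only [fstarPos, decide_eq_true_eq] at hs2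
    rw [hs1] at hs2
    exact absurd hs2.1 (by simp)
  · intro f _
    constructor
    · intro hle
      constructor
      · rw [numInc, Nat.card_eq_zero]
        left; constructor
        rintro ⟨s, hs1, hs2⟩
        have h := hle s hs2
        simp only [fstarPos, decide_eq_true_eq] at h
        rw [hs1] at h
        exact absurd h.1 (by simp)
      · have hfsb : f sb = false := by
          cases h : f sb with
          | false => rfl
          | true => rw [hle sb h] at hsbf; exact absurd hsbf (by simp)
        rw [numDec]
        have hne : Nonempty {s : Fin n → Bool // s i = true ∧ f s = false} :=
          ⟨⟨sb, hsbi, hfsb⟩⟩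
        exact Nat.one_le_iff_ne_zero.mpr (Nat.card_ne_zero.mpr ⟨hne, inferInstance⟩)
    · intro hge
      rw [numDec]
      have hss : Subsingleton {s : Fin n → Bool // s i = true ∧ f s = false} := by
        constructor
        rintro ⟨s, hs1, hs2⟩ ⟨t, ht1, ht2⟩
        have hfs : fstarPos ε i s = false := by
          cases h : fstarPos ε i s with
          | false => rfl
          | true => rw [hge s h] at hs2; exact absurd hs2 (by simp)
        have hft : fstarPos ε i t = false := by
          cases h : fstarPos ε i t with
          | false => rfl
          | true => rw [hge t h] at ht2; exact absurd ht2 (by simp)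
        exact Subtype.ext ((hmem s hs1 hfs).trans (hmem t ht1 hft).symm)
      exact le_trans
        (Nat.card_le_card_of_injective (fun _ => Unit.unit)
          (fun a b _ => Subsingleton.elim a b)) (by simp)
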